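/- Let Λ : M_{d_A}(ℂ) → M_{d_B}(ℂ) be a channel, and let Υ be a linear map from the vector space of linear maps M_{d_A}(ℂ) → M_{d_B}(ℂ) to the vector space of linear maps M_{d_{A'}}(ℂ) → M_{d_{B'}}(ℂ) such that Υ maps channels to channels and PPT-binding channels to PPT-binding channels. Then R_KE(Υ(Λ)) ≤ R_KE(Λ). -/

import Mathlib

open Matrix
open scoped ComplexOrder

section Defs

variable {ιA ιB : Type*}

/-- Partial transpose on the second tensor factor. -/
def ptranspose (M : Matrix (ιA × ιB) (ιA × ιB) ℂ) : Matrix (ιA × ιB) (ιA × ιB) ℂ :=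
  Matrix.of fun p q => M (p.1, q.2) (q.1, p.2)

/-- PPT matrix: both it and its partial transpose are positive semidefinite. -/
def IsPPT [Fintype ιA] [Fintype ιB] (M : Matrix (ιA × ιB) (ιA × ιB) ℂ) : Prop :=
  M.PosSemidef ∧ (ptranspose M).PosSemidef

/-- A quantum state: positive semidefinite with trace one. -/
def IsState {ι : Type*} [Fintype ι] (ρ : Matrix ι ι ℂ) : Prop :=
  ρ.PosSemidef ∧ ρ.trace = 1

/-- The map `id_R ⊗ Φ` acting on matrices over a product index. -/
def idTensor (ιR : Type*) (Φ : Matrix ιA ιA ℂ →ₗ[ℂ] Matrix ιB ιB ℂ) :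
    Matrix (ιR × ιA) (ιR × ιA) ℂ →ₗ[ℂ] Matrix (ιR × ιB) (ιR × ιB) ℂ where
  toFun M := Matrix.of fun p q => Φ (Matrix.of fun a b => M (p.1, a) (q.1, b)) p.2 q.2
  map_add' M N := by
    funext p q
    show Φ ((Matrix.of fun a b => M (p.1, a) (q.1, b)) + (Matrix.of fun a b => N (p.1, a) (q.1, b))) p.2 q.2 = _
    rw [map_add]
    rfl
  map_smul' c M := by
    funext p q
    show Φ (c • (Matrix.of fun a b => M (p.1, a) (q.1, b))) p.2 q.2 = _
    rw [_root_.map_smul]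
    rfl

/-- Complete positivity. -/
def IsCP [Fintype ιA] [Fintype ιB] (Φ : Matrix ιA ιA ℂ →ₗ[ℂ] Matrix ιB ιB ℂ) : Prop :=
  ∀ (k : ℕ) (X : Matrix (Fin k × ιA) (Fin k × ιA) ℂ), X.PosSemidef →
    ((idTensor (Fin k) Φ) X).PosSemidef

/-- Trace preservation. -/
def IsTP [Fintype ιA] [Fintype ιB] (Φ : Matrix ιA ιA ℂ →ₗ[ℂ] Matrix ιB ιB ℂ) : Prop :=
  ∀ X : Matrix ιA ιA ℂ, (Φ X).trace = X.trace

/-- A quantum channel: completely positive and trace preserving. -/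
def IsChannel [Fintype ιA] [Fintype ιB] (Φ : Matrix ιA ιA ℂ →ₗ[ℂ] Matrix ιB ιB ℂ) : Prop :=
  IsCP Φ ∧ IsTP Φ

/-- A map is PPT-binding if `id_k ⊗ Φ` sends positive semidefinite matrices to PPT matrices. -/
def PPTBinding [Fintype ιA] [Fintype ιB] (Φ : Matrix ιA ιA ℂ →ₗ[ℂ] Matrix ιB ιB ℂ) : Prop :=
  ∀ (k : ℕ) (X : Matrix (Fin k × ιA) (Fin k × ιA) ℂ), X.PosSemidef →
    IsPPT ((idTensor (Fin k) Φ) X)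

/-- A PPT-binding channel. -/
def PPTBindingChannel [Fintype ιA] [Fintype ιB] (Φ : Matrix ιA ιA ℂ →ₗ[ℂ] Matrix ιB ιB ℂ) : Prop :=
  IsChannel Φ ∧ PPTBinding Φ

/-- The channel robustness with respect to PPT-binding channels. -/
noncomputable def RKE [Fintype ιA] [Fintype ιB] (Λ : Matrix ιA ιA ℂ →ₗ[ℂ] Matrix ιB ιB ℂ) : ℝ :=
  sInf {l : ℝ | 0 ≤ l ∧ ∃ Γ Θ : Matrix ιA ιA ℂ →ₗ[ℂ] Matrix ιB ιB ℂ,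
    PPTBindingChannel Γ ∧ PPTBindingChannel Θ ∧ Λ + (l : ℂ) • Γ = ((1 + l : ℝ) : ℂ) • Θ}

/-- The PPT robustness of a state. -/
noncomputable def RPPT [Fintype ιA] [Fintype ιB] (ρ : Matrix (ιA × ιB) (ιA × ιB) ℂ) : ℝ :=
  sInf {t : ℝ | ∃ δ : Matrix (ιA × ιB) (ιA × ιB) ℂ, IsPPT δ ∧ IsPPT (ρ + δ) ∧ (δ.trace).re = t}

/-- Operator norm of a matrix. -/
noncomputable def opNorm {ι : Type*} [Fintype ι] [DecidableEq ι] (M : Matrix ι ι ℂ) : ℝ :=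
  ‖Matrix.toEuclideanCLM (𝕜 := ℂ) (n := ι) M‖

/-- Trace norm of a matrix. -/
noncomputable def traceNorm {ι : Type*} [Fintype ι] [DecidableEq ι] (M : Matrix ι ι ℂ) : ℝ :=
  (((Matrix.posSemidef_conjTranspose_mul_self M).1.eigenvectorUnitary.1 *
      diagonal (fun i => ((Real.sqrt ((Matrix.posSemidef_conjTranspose_mul_self M).1.eigenvalues i) : ℝ) : ℂ)) *
      (star (Matrix.posSemidef_conjTranspose_mul_self M).1.eigenvectorUnitary : Matrix ι ι ℂ)).trace).re

end Defs

section Aux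

set_option linter.unusedSectionVars false

variable {ιR ιB : Type*} [Fintype ιR] [Fintype ιB]

/-- Partial trace over the second factor. -/
noncomputable def trOut (M : Matrix (ιR × ιB) (ιR × ιB) ℂ) : Matrix ιR ιR ℂ :=
  Matrix.of fun r r' => ∑ b : ιB, M (r, b) (r', b)

/-- Tensor with the identity on the second factor. -/
noncomputable def tensId (ιB : Type*) [Fintype ιB] [DecidableEq ιB] {ιR : Type*}
    (Y : Matrix ιR ιR ℂ) : Matrix (ιR × ιB) (ιR × ιB) ℂ :=
  Matrix.of fun p q => if p.2 = q.2 then Y p.1 q.1 else 0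

lemma trOut_isHermitian {M : Matrix (ιR × ιB) (ιR × ιB) ℂ} (h : M.IsHermitian) :
    (trOut M).IsHermitian := by
  ext r r'
  simp only [conjTranspose_apply, trOut, Matrix.of_apply, star_sum]
  exact Finset.sum_congr rfl fun b _ => h.apply _ _

lemma tensId_isHermitian [DecidableEq ιB] {Y : Matrix ιR ιR ℂ} (h : Y.IsHermitian) :
    (tensId ιB Y).IsHermitian := by
  ext p q
  simp only [conjTranspose_apply, tensId, Matrix.of_apply]
  rcases eq_or_ne p.2 q.2 with he | he
  · rw [if_pos he, if_pos he.symm]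
    exact h.apply _ _
  · rw [if_neg he, if_neg (Ne.symm he), star_zero]

lemma tensId_form [DecidableEq ιB] (Y : Matrix ιR ιR ℂ) (x : ιR × ιB → ℂ) :
    star x ⬝ᵥ (tensId ιB Y) *ᵥ x
      = ∑ b : ιB, star (fun r => x (r, b)) ⬝ᵥ Y *ᵥ (fun r => x (r, b)) := by
  simp only [dotProduct, mulVec, tensId, Matrix.of_apply, Pi.star_apply,
    Fintype.sum_prod_type]
  rw [Finset.sum_comm]
  refine Finset.sum_congr rfl fun b _ => Finset.sum_congr rfl fun r _ => ?_
  simp [Finset.mul_sum, Finset.sum_mul]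

lemma tensId_posSemidef [DecidableEq ιB] {Y : Matrix ιR ιR ℂ} (h : Y.PosSemidef) :
    (tensId ιB Y).PosSemidef := by
  refine .of_dotProduct_mulVec_nonneg (tensId_isHermitian h.1) fun x => ?_
  rw [tensId_form]
  exact Finset.sum_nonneg fun b _ => h.dotProduct_mulVec_nonneg _

lemma trOut_form [DecidableEq ιB] (M : Matrix (ιR × ιB) (ιR × ιB) ℂ) (y : ιR → ℂ) :
    star y ⬝ᵥ (trOut M) *ᵥ y
      = ∑ c : ιB, star (fun p : ιR × ιB => if p.2 = c then y p.1 else 0) ⬝ᵥ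
          M *ᵥ (fun p : ιR × ιB => if p.2 = c then y p.1 else 0) := by
  simp only [dotProduct, mulVec, trOut, Matrix.of_apply, Pi.star_apply,
    Fintype.sum_prod_type, apply_ite (star : ℂ → ℂ), star_zero, mul_ite, mul_zero,
    ite_mul, zero_mul, Finset.sum_ite_eq', Finset.mem_univ, if_true]
  rw [Finset.sum_comm]
  refine Finset.sum_congr rfl fun r _ => ?_
  simp only [Finset.sum_mul, Finset.mul_sum]
  rw [Finset.sum_comm]

lemma trOut_posSemidef [DecidableEq ιB] {M : Matrix (ιR × ιB) (ιR × ιB) ℂ} (h : M.PosSemidef) :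
    (trOut M).PosSemidef := by
  refine .of_dotProduct_mulVec_nonneg (trOut_isHermitian h.1) fun x => ?_
  rw [trOut_form]
  exact Finset.sum_nonneg fun b _ => h.dotProduct_mulVec_nonneg _

lemma ptranspose_isHermitian {M : Matrix (ιR × ιB) (ιR × ιB) ℂ} (h : M.IsHermitian) :
    (ptranspose M).IsHermitian := by
  ext p q
  simp only [conjTranspose_apply, ptranspose, Matrix.of_apply]
  exact h.apply _ _

lemma swap_pqi {α β γ : Type*} [Fintype α] [Fintype β] [Fintype γ] (f : α → β → γ → ℂ) :
    ∑ p : α, ∑ q : β, ∑ i : γ, f p q i = ∑ i : γ, ∑ p : α, ∑ q : β, f p q i :=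
  (Finset.sum_congr rfl fun p _ => Finset.sum_comm).trans Finset.sum_comm

lemma swap4 {α β : Type*} [Fintype α] [Fintype β] (g : α → β → α → β → ℂ) :
    ∑ r : α, ∑ b : β, ∑ r' : α, ∑ b' : β, g r b r' b'
      = ∑ b : β, ∑ b' : β, ∑ r : α, ∑ r' : α, g r b r' b' :=
  calc ∑ r : α, ∑ b : β, ∑ r' : α, ∑ b' : β, g r b r' b'
      = ∑ b : β, ∑ r : α, ∑ r' : α, ∑ b' : β, g r b r' b' := Finset.sum_comm
    _ = ∑ b : β, ∑ r : α, ∑ b' : β, ∑ r' : α, g r b r' b' :=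
        Finset.sum_congr rfl fun b _ => Finset.sum_congr rfl fun r _ => Finset.sum_comm
    _ = ∑ b : β, ∑ b' : β, ∑ r : α, ∑ r' : α, g r b r' b' :=
        Finset.sum_congr rfl fun b _ => Finset.sum_comm

lemma pt_add_trOut_posSemidef [DecidableEq ιB] {M : Matrix (ιR × ιB) (ιR × ιB) ℂ}
    (hM : M.PosSemidef) : (ptranspose M + tensId ιB (trOut M)).PosSemidef := by
  obtain ⟨C, hC⟩ : ∃ C : Matrix (ιR × ιB) (ιR × ιB) ℂ, M = Cᴴ * C := by
    classical
    open scoped MatrixOrder Matrix.Norms.L2Operator in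
    obtain ⟨C, hC⟩ := CStarAlgebra.nonneg_iff_eq_star_mul_self.mp hM.nonneg
    exact ⟨C, hC⟩
  refine .of_dotProduct_mulVec_nonneg
    ((ptranspose_isHermitian hM.1).add (tensId_isHermitian (trOut_isHermitian hM.1)))
    fun x => ?_
  set T : (ιR × ιB) → ιB → ιB → ℂ :=
    fun i b b' => ∑ r, star (x (r, b)) * star (C i (r, b')) with hT
  have hstar : ∀ (i : ιR × ιB) (b b' : ιB),
      star (T i b b') = ∑ r, x (r, b) * C i (r, b') := by
    intro i b b'
    simp [hT, star_sum, star_mul', star_star]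
  have stepA : star x ⬝ᵥ ptranspose M *ᵥ x
      = ∑ i : ιR × ιB, ∑ b : ιB, ∑ b' : ιB, T i b b' * star (T i b' b) := by
    calc star x ⬝ᵥ ptranspose M *ᵥ x
        = ∑ p : ιR × ιB, ∑ q : ιR × ιB, ∑ i : ιR × ιB,
            (star (x p) * star (C i (p.1, q.2))) * (x q * C i (q.1, p.2)) := by
          simp only [dotProduct, mulVec, ptranspose, Matrix.of_apply, hC, Matrix.mul_apply,
            conjTranspose_apply, Pi.star_apply, Finset.mul_sum, Finset.sum_mul]
          exact Finset.sum_congr rfl fun p _ => Finset.sum_congr rfl fun q _ =>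
            Finset.sum_congr rfl fun i _ => by ring
      _ = ∑ i : ιR × ιB, ∑ p : ιR × ιB, ∑ q : ιR × ιB,
            (star (x p) * star (C i (p.1, q.2))) * (x q * C i (q.1, p.2)) := swap_pqi _
      _ = ∑ i : ιR × ιB, ∑ r, ∑ b, ∑ r', ∑ b',
            (star (x (r, b)) * star (C i (r, b'))) * (x (r', b') * C i (r', b)) := by
          simp only [Fintype.sum_prod_type]
      _ = ∑ i : ιR × ιB, ∑ b, ∑ b', ∑ r, ∑ r',
            (star (x (r, b)) * star (C i (r, b'))) * (x (r', b') * C i (r', b)) :=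
          Finset.sum_congr rfl fun i _ => swap4 _
      _ = ∑ i : ιR × ιB, ∑ b : ιB, ∑ b' : ιB, T i b b' * star (T i b' b) := by
          refine Finset.sum_congr rfl fun i _ => Finset.sum_congr rfl fun b _ =>
            Finset.sum_congr rfl fun b' _ => ?_
          rw [hstar, hT, Finset.sum_mul_sum]
  have gram : ∀ z : ιR × ιB → ℂ,
      star z ⬝ᵥ M *ᵥ z = ∑ i : ιR × ιB, star ((C *ᵥ z) i) * ((C *ᵥ z) i) := by
    intro z
    rw [hC, ← Matrix.mulVec_mulVec, Matrix.dotProduct_mulVec, ← Matrix.star_mulVec]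
    simp [dotProduct]
  have hw : ∀ (i : ιR × ιB) (b c : ιB),
      (C *ᵥ fun p : ιR × ιB => if p.2 = c then x (p.1, b) else 0) i = star (T i b c) := by
    intro i b c
    rw [hstar]
    simp only [mulVec, dotProduct, Fintype.sum_prod_type, mul_ite, mul_zero,
      Finset.sum_ite_eq', Finset.mem_univ, if_true]
    exact Finset.sum_congr rfl fun r _ => mul_comm _ _
  have stepB : star x ⬝ᵥ tensId ιB (trOut M) *ᵥ x
      = ∑ i : ιR × ιB, ∑ b : ιB, ∑ b' : ιB, T i b b' * star (T i b b') := by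
    calc star x ⬝ᵥ tensId ιB (trOut M) *ᵥ x
        = ∑ b : ιB, star (fun r => x (r, b)) ⬝ᵥ trOut M *ᵥ (fun r => x (r, b)) :=
          tensId_form _ _
      _ = ∑ b : ιB, ∑ c : ιB,
            star (fun p : ιR × ιB => if p.2 = c then x (p.1, b) else 0) ⬝ᵥ
              M *ᵥ (fun p : ιR × ιB => if p.2 = c then x (p.1, b) else 0) :=
          Finset.sum_congr rfl fun b _ => trOut_form _ _
      _ = ∑ b : ιB, ∑ c : ιB, ∑ i : ιR × ιB,
            star ((C *ᵥ fun p : ιR × ιB => if p.2 = c then x (p.1, b) else 0) i) *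
              ((C *ᵥ fun p : ιR × ιB => if p.2 = c then x (p.1, b) else 0) i) :=
          Finset.sum_congr rfl fun b _ => Finset.sum_congr rfl fun c _ => gram _
      _ = ∑ i : ιR × ιB, ∑ b : ιB, ∑ c : ιB,
            star ((C *ᵥ fun p : ιR × ιB => if p.2 = c then x (p.1, b) else 0) i) *
              ((C *ᵥ fun p : ιR × ιB => if p.2 = c then x (p.1, b) else 0) i) := swap_pqi _
      _ = ∑ i : ιR × ιB, ∑ b : ιB, ∑ b' : ιB, T i b b' * star (T i b b') := by
          refine Finset.sum_congr rfl fun i _ => Finset.sum_congr rfl fun b _ =>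
            Finset.sum_congr rfl fun c _ => ?_
          rw [hw, star_star]
  have expand : ∑ i : ιR × ιB, ∑ b : ιB, ∑ b' : ιB,
        (T i b b' + T i b' b) * star (T i b b' + T i b' b)
      = 2 * (star x ⬝ᵥ ptranspose M *ᵥ x + star x ⬝ᵥ tensId ιB (trOut M) *ᵥ x) := by
    rw [stepA, stepB, ← Finset.sum_add_distrib, Finset.mul_sum]
    refine Finset.sum_congr rfl fun i _ => ?_
    have h3 : (∑ b : ιB, ∑ b' : ιB, T i b' b * star (T i b b'))
        = ∑ b : ιB, ∑ b' : ιB, T i b b' * star (T i b' b) := Finset.sum_comm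
    have h4 : (∑ b : ιB, ∑ b' : ιB, T i b' b * star (T i b' b))
        = ∑ b : ιB, ∑ b' : ιB, T i b b' * star (T i b b') := Finset.sum_comm
    calc ∑ b : ιB, ∑ b' : ιB, (T i b b' + T i b' b) * star (T i b b' + T i b' b)
        = ((∑ b : ιB, ∑ b' : ιB, T i b b' * star (T i b b'))
            + (∑ b : ιB, ∑ b' : ιB, T i b' b * star (T i b b')))
          + ((∑ b : ιB, ∑ b' : ιB, T i b b' * star (T i b' b))
            + (∑ b : ιB, ∑ b' : ιB, T i b' b * star (T i b' b))) := by
          simp only [star_add, add_mul, mul_add, Finset.sum_add_distrib]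
      _ = 2 * ((∑ b : ιB, ∑ b' : ιB, T i b b' * star (T i b' b))
            + ∑ b : ιB, ∑ b' : ιB, T i b b' * star (T i b b')) := by
          rw [h3, h4]; ring
  have key : (0:ℂ) ≤ 2 * (star x ⬝ᵥ ptranspose M *ᵥ x + star x ⬝ᵥ tensId ιB (trOut M) *ᵥ x) := by
    rw [← expand]
    exact Finset.sum_nonneg fun i _ => Finset.sum_nonneg fun b _ =>
      Finset.sum_nonneg fun b' _ => mul_star_self_nonneg _
  have h2 : (0:ℂ) ≤ star x ⬝ᵥ ptranspose M *ᵥ x + star x ⬝ᵥ tensId ιB (trOut M) *ᵥ x := by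
    have h5 := mul_nonneg (by rw [Complex.le_def]; norm_num : (0:ℂ) ≤ 2⁻¹) key
    calc (0:ℂ) ≤ 2⁻¹ * (2 * (star x ⬝ᵥ ptranspose M *ᵥ x
        + star x ⬝ᵥ tensId ιB (trOut M) *ᵥ x)) := h5
      _ = _ := by ring
  rw [add_mulVec, dotProduct_add]
  exact h2

end Aux

section Extra

set_option linter.unusedSectionVars false

lemma ptranspose_add {ιR ιB : Type*} (A B : Matrix (ιR × ιB) (ιR × ιB) ℂ) :
    ptranspose (A + B) = ptranspose A + ptranspose B := rfl

lemma ptranspose_smul {ιR ιB : Type*} (c : ℂ) (A : Matrix (ιR × ιB) (ιR × ιB) ℂ) :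
    ptranspose (c • A) = c • ptranspose A := rfl

lemma ptranspose_tensId {ιR ιB : Type*} [Fintype ιR] [Fintype ιB] [DecidableEq ιB]
    (Y : Matrix ιR ιR ℂ) : ptranspose (tensId ιB Y) = tensId ιB Y := by
  ext p q
  simp only [ptranspose, tensId, Matrix.of_apply]
  rcases eq_or_ne p.2 q.2 with he | he
  · rw [if_pos he.symm, if_pos he]
  · rw [if_neg (Ne.symm he), if_neg he]

lemma posSemidef_smul_real {ι : Type*} [Fintype ι] {M : Matrix ι ι ℂ} (h : M.PosSemidef)
    {c : ℝ} (hc : 0 ≤ c) : ((c : ℂ) • M).PosSemidef := by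
  refine .of_dotProduct_mulVec_nonneg ?_ fun x => ?_
  · ext p q
    simp only [conjTranspose_apply, Matrix.smul_apply, smul_eq_mul, star_mul',
      Complex.star_def, Complex.conj_ofReal]
    rw [← Complex.star_def, h.1.apply p q]
  · rw [smul_mulVec, dotProduct_smul, smul_eq_mul]
    exact mul_nonneg (by exact_mod_cast Complex.zero_le_real.mpr hc) (h.dotProduct_mulVec_nonneg x)

lemma idTensor_apply_entry {ιA ιB ιR : Type*} (Φ : Matrix ιA ιA ℂ →ₗ[ℂ] Matrix ιB ιB ℂ)
    (X : Matrix (ιR × ιA) (ιR × ιA) ℂ) (p q : ιR × ιB) :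
    idTensor ιR Φ X p q = Φ (Matrix.of fun a b => X (p.1, a) (q.1, b)) p.2 q.2 := rfl

lemma idTensor_add_apply {ιA ιB ιR : Type*} (Φ Ψ : Matrix ιA ιA ℂ →ₗ[ℂ] Matrix ιB ιB ℂ)
    (X : Matrix (ιR × ιA) (ιR × ιA) ℂ) :
    idTensor ιR (Φ + Ψ) X = idTensor ιR Φ X + idTensor ιR Ψ X := by
  ext p q
  simp [idTensor_apply_entry]

lemma idTensor_smul_apply {ιA ιB ιR : Type*} (c : ℂ) (Φ : Matrix ιA ιA ℂ →ₗ[ℂ] Matrix ιB ιB ℂ)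
    (X : Matrix (ιR × ιA) (ιR × ιA) ℂ) :
    idTensor ιR (c • Φ) X = c • idTensor ιR Φ X := by
  ext p q
  simp [idTensor_apply_entry]

/-- The completely depolarizing channel. -/
noncomputable def depol (dA dB : ℕ) :
    Matrix (Fin dA) (Fin dA) ℂ →ₗ[ℂ] Matrix (Fin dB) (Fin dB) ℂ where
  toFun X := (X.trace * (dB : ℂ)⁻¹) • (1 : Matrix (Fin dB) (Fin dB) ℂ)
  map_add' X Y := by simp [trace_add, add_mul, add_smul]
  map_smul' c X := by simp [trace_smul, smul_smul, smul_eq_mul, mul_assoc]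

lemma idTensor_depol {dA dB k : ℕ} (X : Matrix (Fin k × Fin dA) (Fin k × Fin dA) ℂ) :
    idTensor (Fin k) (depol dA dB) X = (dB : ℂ)⁻¹ • tensId (Fin dB) (trOut X) := by
  ext p q
  simp only [idTensor_apply_entry, depol, LinearMap.coe_mk, AddHom.coe_mk,
    Matrix.smul_apply, Matrix.one_apply, tensId, trOut, Matrix.of_apply, Matrix.trace,
    Matrix.diag, smul_eq_mul, mul_ite, mul_zero, mul_one]
  rcases eq_or_ne p.2 q.2 with he | he
  · rw [if_pos he, if_pos he]
    ring
  · rw [if_neg he, if_neg he]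

lemma trOut_idTensor {dA dB k : ℕ} {Φ : Matrix (Fin dA) (Fin dA) ℂ →ₗ[ℂ] Matrix (Fin dB) (Fin dB) ℂ}
    (hΦ : IsTP Φ) (X : Matrix (Fin k × Fin dA) (Fin k × Fin dA) ℂ) :
    trOut (idTensor (Fin k) Φ X) = trOut X := by
  ext r r'
  have := hΦ (Matrix.of fun a b => X (r, a) (r', b))
  simpa [trOut, idTensor_apply_entry, Matrix.trace, Matrix.diag] using this

lemma depol_pptBindingChannel {dA dB : ℕ} (hdB : 0 < dB) :
    PPTBindingChannel (depol dA dB) := by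
  have hpsd : ∀ (k : ℕ) (X : Matrix (Fin k × Fin dA) (Fin k × Fin dA) ℂ), X.PosSemidef →
      (idTensor (Fin k) (depol dA dB) X).PosSemidef := by
    intro k X hX
    rw [idTensor_depol]
    have : ((dB : ℂ))⁻¹ = (((dB : ℝ)⁻¹ : ℝ) : ℂ) := by push_cast; ring
    rw [this]
    exact posSemidef_smul_real (tensId_posSemidef (trOut_posSemidef hX))
      (inv_nonneg.mpr (Nat.cast_nonneg dB))
  refine ⟨⟨fun k X hX => hpsd k X hX, fun X => ?_⟩, fun k X hX => ?_⟩
  · simp only [depol, LinearMap.coe_mk, AddHom.coe_mk, trace_smul, trace_one, Fintype.card_fin, smul_eq_mul]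
    have : ((dB : ℂ)) ≠ 0 := Nat.cast_ne_zero.mpr hdB.ne'
    field_simp
  · refine ⟨hpsd k X hX, ?_⟩
    rw [idTensor_depol, ptranspose_smul, ptranspose_tensId]
    rw [← idTensor_depol]
    exact hpsd k X hX

end Extra

/-- **Monotonicity of the channel robustness under KE-preserving processes.**
If `Υ` is a linear map on the space of linear maps between matrix algebras that sends
channels to channels and PPT-binding channels to PPT-binding channels, then the channel
robustness (with respect to PPT-binding channels) cannot increase under `Υ`. -/
theorem RKE_monotone {dA dB dA' dB' : ℕ}
    (Λ : Matrix (Fin dA) (Fin dA) ℂ →ₗ[ℂ] Matrix (Fin dB) (Fin dB) ℂ)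
    (hΛ : IsChannel Λ)
    (Υ : (Matrix (Fin dA) (Fin dA) ℂ →ₗ[ℂ] Matrix (Fin dB) (Fin dB) ℂ) →ₗ[ℂ]
         (Matrix (Fin dA') (Fin dA') ℂ →ₗ[ℂ] Matrix (Fin dB') (Fin dB') ℂ))
    (hch : ∀ Φ : Matrix (Fin dA) (Fin dA) ℂ →ₗ[ℂ] Matrix (Fin dB) (Fin dB) ℂ,
      IsChannel Φ → IsChannel (Υ Φ))
    (hke : ∀ Φ : Matrix (Fin dA) (Fin dA) ℂ →ₗ[ℂ] Matrix (Fin dB) (Fin dB) ℂ,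
      PPTBindingChannel Φ → PPTBindingChannel (Υ Φ)) :
    RKE (Υ Λ) ≤ RKE Λ := by
  have hsub : {l : ℝ | 0 ≤ l ∧ ∃ Γ Θ : Matrix (Fin dA) (Fin dA) ℂ →ₗ[ℂ] Matrix (Fin dB) (Fin dB) ℂ,
        PPTBindingChannel Γ ∧ PPTBindingChannel Θ ∧ Λ + (l : ℂ) • Γ = ((1 + l : ℝ) : ℂ) • Θ}
      ⊆ {l : ℝ | 0 ≤ l ∧ ∃ Γ Θ : Matrix (Fin dA') (Fin dA') ℂ →ₗ[ℂ] Matrix (Fin dB') (Fin dB') ℂ,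
        PPTBindingChannel Γ ∧ PPTBindingChannel Θ ∧ Υ Λ + (l : ℂ) • Γ = ((1 + l : ℝ) : ℂ) • Θ} := by
    rintro l ⟨hl, Γ, Θ, hΓ, hΘ, heq⟩
    exact ⟨hl, Υ Γ, Υ Θ, hke Γ hΓ, hke Θ hΘ, by
      rw [← _root_.map_smul, ← map_add, heq, _root_.map_smul]⟩
  have hbdd : BddBelow {l : ℝ | 0 ≤ l ∧
      ∃ Γ Θ : Matrix (Fin dA') (Fin dA') ℂ →ₗ[ℂ] Matrix (Fin dB') (Fin dB') ℂ,
        PPTBindingChannel Γ ∧ PPTBindingChannel Θ ∧ Υ Λ + (l : ℂ) • Γ = ((1 + l : ℝ) : ℂ) • Θ} :=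
    ⟨0, fun l hl => hl.1⟩
  have hne : {l : ℝ | 0 ≤ l ∧
      ∃ Γ Θ : Matrix (Fin dA) (Fin dA) ℂ →ₗ[ℂ] Matrix (Fin dB) (Fin dB) ℂ,
        PPTBindingChannel Γ ∧ PPTBindingChannel Θ ∧ Λ + (l : ℂ) • Γ = ((1 + l : ℝ) : ℂ) • Θ}.Nonempty := by
    rcases Nat.eq_zero_or_pos dB with h0 | hdB
    · subst h0
      have hpsd : ∀ (k : ℕ) (N : Matrix (Fin k × Fin 0) (Fin k × Fin 0) ℂ), N.PosSemidef := by
        intro k N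
        refine .of_dotProduct_mulVec_nonneg ?_ fun x => by simp [dotProduct]
        ext p q
        exact p.2.elim0
      refine ⟨0, le_refl 0, Λ, Λ, ⟨hΛ, fun k X hX => ⟨hpsd k _, hpsd k _⟩⟩,
        ⟨hΛ, fun k X hX => ⟨hpsd k _, hpsd k _⟩⟩, ?_⟩
      push_cast
      simp
    · have hdBC : ((dB : ℂ)) ≠ 0 := Nat.cast_ne_zero.mpr hdB.ne'
      have hcC : (((1 : ℝ) + (dB : ℝ) : ℝ) : ℂ) ≠ 0 := by
        rw [Complex.ofReal_ne_zero]
        positivity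
      have hc0 : (0 : ℝ) ≤ ((1 : ℝ) + (dB : ℝ))⁻¹ := by positivity
      set Θ : Matrix (Fin dA) (Fin dA) ℂ →ₗ[ℂ] Matrix (Fin dB) (Fin dB) ℂ :=
        (((1 : ℝ) + (dB : ℝ) : ℝ) : ℂ)⁻¹ • (Λ + (dB : ℂ) • depol dA dB) with hΘdef
      have hcast : ((((1 : ℝ) + (dB : ℝ))⁻¹ : ℝ) : ℂ) = (((1 : ℝ) + (dB : ℝ) : ℝ) : ℂ)⁻¹ := by
        push_cast
        ring
      have hΘapp : ∀ (k : ℕ) (X : Matrix (Fin k × Fin dA) (Fin k × Fin dA) ℂ),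
          idTensor (Fin k) Θ X = ((((1 : ℝ) + (dB : ℝ))⁻¹ : ℝ) : ℂ) •
            (idTensor (Fin k) Λ X + tensId (Fin dB) (trOut X)) := by
        intro k X
        rw [hΘdef, idTensor_smul_apply, idTensor_add_apply, idTensor_smul_apply,
          idTensor_depol, smul_smul, mul_inv_cancel₀ hdBC, one_smul, hcast]
      have hΘCP : IsCP Θ := by
        intro k X hX
        rw [hΘapp]
        exact posSemidef_smul_real ((hΛ.1 k X hX).add
          (tensId_posSemidef (trOut_posSemidef hX))) hc0
      have hΘTP : IsTP Θ := by
        intro X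
        have h1 : Θ X = (((1 : ℝ) + (dB : ℝ) : ℝ) : ℂ)⁻¹ •
            (Λ X + (dB : ℂ) • ((X.trace * (dB : ℂ)⁻¹) • (1 : Matrix (Fin dB) (Fin dB) ℂ))) := rfl
        rw [h1, trace_smul, trace_add, trace_smul, trace_smul, trace_one, Fintype.card_fin, hΛ.2 X]
        simp only [smul_eq_mul]
        field_simp
        push_cast
        ring
      have hΘ : PPTBindingChannel Θ := by
        refine ⟨⟨hΘCP, hΘTP⟩, fun k X hX => ⟨hΘCP k X hX, ?_⟩⟩
        rw [hΘapp, ptranspose_smul, ptranspose_add, ptranspose_tensId,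
          show trOut X = trOut (idTensor (Fin k) Λ X) from (trOut_idTensor hΛ.2 X).symm]
        exact posSemidef_smul_real (pt_add_trOut_posSemidef (hΛ.1 k X hX)) hc0
      refine ⟨(dB : ℝ), Nat.cast_nonneg dB, depol dA dB, Θ, depol_pptBindingChannel hdB, hΘ, ?_⟩
      rw [hΘdef, smul_smul]
      have : ((1 + (dB : ℝ) : ℝ) : ℂ) = (((1 : ℝ) + (dB : ℝ) : ℝ) : ℂ) := by norm_num
      rw [this, mul_inv_cancel₀ hcC, one_smul]
      push_cast
      ring_nf
  exact csInf_le_csInf hbdd hne hsub
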